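/- arXiv:2107.14672 — 6 statements merged into one kernel-verified Lean document; each statement's English description precedes it below -/
import Mathlib

section
/- In an optimal schedule for the heterogeneous data-center right-sizing problem, a server never switches lanes: if ŷ_{t-1,k} = j > 0 and ŷ_{t,k} ≠ j, then there is no lane k' ≠ k with ŷ_{t-1,k'} ≠ j and ŷ_{t,k'} = j. -/
open Finset

/-- A schedule `x` (where `x t j` is the number of active servers of type `j` at time `t`)
is feasible for horizon `T`, `d` server types with `m j` servers of type `j`, and job
volumes `lam`: all servers are off at time `0` and after time `T`, the demand is met,
and no more servers are used than available. -/
def Feasible (T d : ℕ) (m lam : ℕ → ℕ) (x : ℕ → ℕ → ℕ) : Prop :=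
  (∀ j, x 0 j = 0) ∧
  (∀ t, T < t → ∀ j, x t j = 0) ∧
  (∀ t ∈ Finset.Icc 1 T, lam t ≤ ∑ j ∈ Finset.Icc 1 d, x t j ∧ ∀ j, x t j ≤ m j)

/-- Total cost of a schedule: operating costs plus switching costs for powering up. -/
noncomputable def cost (T d : ℕ) (β l : ℕ → ℝ) (x : ℕ → ℕ → ℕ) : ℝ :=
  ∑ t ∈ Finset.Icc 1 T, ∑ j ∈ Finset.Icc 1 d,
    (l j * (x t j : ℝ) + β j * ((x t j - x (t - 1) j : ℕ) : ℝ))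

/-- An optimal schedule: feasible and of minimum cost among feasible schedules. -/
def Optimal (T d : ℕ) (m lam : ℕ → ℕ) (β l : ℕ → ℝ) (x : ℕ → ℕ → ℕ) : Prop :=
  Feasible T d m lam x ∧
  ∀ x', Feasible T d m lam x' → cost T d β l x ≤ cost T d β l x'

/-- The lane representation: `lane d x t k` is the server type serving lane `k`
at time `t` (largest `j ∈ [1,d]` with `∑_{j'=j}^{d} x t j' ≥ k`, else `0`). -/
noncomputable def lane (d : ℕ) (x : ℕ → ℕ → ℕ) (t k : ℕ) : ℕ :=
  sSup {j | j ∈ Finset.Icc 1 d ∧ k ≤ ∑ j' ∈ Finset.Icc j d, x t j'}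

lemma lane_spec {d : ℕ} {x : ℕ → ℕ → ℕ} {t k j : ℕ}
    (h : (sSup {j | j ∈ Finset.Icc 1 d ∧ k ≤ ∑ j' ∈ Finset.Icc j d, x t j'}) = j)
    (hj : 0 < j) (hk : 0 < k) :
    1 ≤ j ∧ j ≤ d ∧ k ≤ ∑ j' ∈ Finset.Icc j d, x t j' ∧
      ∑ j' ∈ Finset.Icc (j+1) d, x t j' < k := by
  set A : Set ℕ := {j | j ∈ Finset.Icc 1 d ∧ k ≤ ∑ j' ∈ Finset.Icc j d, x t j'} with hA
  have hbdd : BddAbove A := ⟨d, fun i hi => (Finset.mem_Icc.mp hi.1).2⟩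
  have hne : A.Nonempty := by
    by_contra hcon
    rw [Set.not_nonempty_iff_eq_empty] at hcon
    rw [hcon] at h
    simp at h
    omega
  have hmem : j ∈ A := h ▸ Nat.sSup_mem hne hbdd
  obtain ⟨hj1, hle⟩ := hmem
  rw [Finset.mem_Icc] at hj1
  refine ⟨hj1.1, hj1.2, hle, ?_⟩
  by_contra hcon
  push_neg at hcon
  have hjd : j + 1 ≤ d := by
    by_contra hd
    rw [Finset.Icc_eq_empty (by omega)] at hcon
    simp at hcon
    omega
  have : j + 1 ∈ A := ⟨Finset.mem_Icc.mpr ⟨by omega, hjd⟩, hcon⟩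
  have := le_csSup hbdd this
  omega

lemma lane_eq {d : ℕ} {x : ℕ → ℕ → ℕ} {t k j : ℕ}
    (hj1 : 1 ≤ j) (hjd : j ≤ d)
    (h1 : k ≤ ∑ j' ∈ Finset.Icc j d, x t j')
    (h2 : ∑ j' ∈ Finset.Icc (j+1) d, x t j' < k) :
    (sSup {j | j ∈ Finset.Icc 1 d ∧ k ≤ ∑ j' ∈ Finset.Icc j d, x t j'}) = j := by
  set A : Set ℕ := {j | j ∈ Finset.Icc 1 d ∧ k ≤ ∑ j' ∈ Finset.Icc j d, x t j'} with hA
  have hbdd : BddAbove A := ⟨d, fun i hi => (Finset.mem_Icc.mp hi.1).2⟩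
  have hjm : j ∈ A := ⟨Finset.mem_Icc.mpr ⟨hj1, hjd⟩, h1⟩
  refine le_antisymm (csSup_le ⟨j, hjm⟩ ?_) (le_csSup hbdd hjm)
  intro i hi
  obtain ⟨hi1, hi2⟩ := hi
  by_contra hcon
  have hsub : Finset.Icc i d ⊆ Finset.Icc (j+1) d :=
    Finset.Icc_subset_Icc_left (by omega)
  have h3 : ∑ j' ∈ Finset.Icc i d, x t j' ≤ ∑ j' ∈ Finset.Icc (j+1) d, x t j' :=
    Finset.sum_le_sum_of_subset hsub
  omega

lemma lane_zero {d : ℕ} {x : ℕ → ℕ → ℕ} {t : ℕ} (hd : 1 ≤ d) :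
    (sSup {j | j ∈ Finset.Icc 1 d ∧ 0 ≤ ∑ j' ∈ Finset.Icc j d, x t j'}) = d := by
  have : {j | j ∈ Finset.Icc 1 d ∧ 0 ≤ ∑ j' ∈ Finset.Icc j d, x t j'}
      = {j | j ∈ Finset.Icc 1 d} := by
    ext i; simp
  rw [this]
  have hbdd : BddAbove {j | j ∈ Finset.Icc 1 d} := ⟨d, fun i hi => (Finset.mem_Icc.mp hi).2⟩
  have hdm : d ∈ {j | j ∈ Finset.Icc 1 d} := Finset.mem_Icc.mpr ⟨hd, le_refl d⟩
  refine le_antisymm (csSup_le ⟨d, hdm⟩ ?_) (le_csSup hbdd hdm)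
  intro i hi
  exact (Finset.mem_Icc.mp hi).2

set_option maxHeartbeats 1000000 in
lemma exchange (T d : ℕ) (m lam : ℕ → ℕ) (β l : ℕ → ℝ)
    (hl : ∀ j j', 1 ≤ j → j < j' → j' ≤ d → l j' < l j)
    (hβ : ∀ j j', 1 ≤ j → j < j' → j' ≤ d → β j < β j')
    (hβ0 : ∀ j, 1 ≤ j → j ≤ d → 0 < β j)
    (x : ℕ → ℕ → ℕ) (hopt : Optimal T d m lam β l x)
    (j p a b : ℕ) (hj1 : 1 ≤ j) (hjp : j < p) (hpd : p ≤ d)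
    (ha1 : 1 ≤ a) (hab : a ≤ b) (hbT : b ≤ T)
    (hmid : ∀ s, a ≤ s → s ≤ b → 1 ≤ x s j ∧ x s p < m p)
    (hL : (m p ≤ x (a-1) p ∨ x a p < x (a-1) p) ∨ x (a-1) j = 0)
    (hR : (b < T ∧ (m p ≤ x (b+1) p ∨ x b p < x (b+1) p)) ∨ (b = T ∨ x (b+1) j = 0))
    (hcompat : (m p ≤ x (a-1) p ∨ x a p < x (a-1) p) ∨
               (b < T ∧ (m p ≤ x (b+1) p ∨ x b p < x (b+1) p))) :
    False := by
  have hjne : j ≠ p := Nat.ne_of_lt hjp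
  have hβj : 0 < β j := hβ0 j hj1 (by omega)
  have hβp : 0 < β p := hβ0 p (by omega) hpd
  have hβjp : β j < β p := hβ j p hj1 hjp hpd
  have hlpj : l p < l j := hl j p hj1 hjp hpd
  obtain ⟨hfeas, hmin⟩ := hopt
  obtain ⟨hf0, hfT, hfC⟩ := hfeas
  set x' : ℕ → ℕ → ℕ := fun s q =>
    if a ≤ s ∧ s ≤ b then
      (if q = j then x s q - 1 else if q = p then x s q + 1 else x s q)
    else x s q with hx'def
  have hx'o : ∀ s q, (s < a ∨ b < s) → x' s q = x s q := by
    intro s q hs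
    simp only [hx'def]
    rw [if_neg (by omega)]
  have hx'j : ∀ s, a ≤ s → s ≤ b → x' s j = x s j - 1 := by
    intro s h1 h2
    simp only [hx'def]
    rw [if_pos ⟨h1, h2⟩]
    simp
  have hx'p : ∀ s, a ≤ s → s ≤ b → x' s p = x s p + 1 := by
    intro s h1 h2
    simp only [hx'def]
    rw [if_pos ⟨h1, h2⟩]
    simp [hjp.ne, hjp.ne']
  have hx'q : ∀ s q, q ≠ j → q ≠ p → x' s q = x s q := by
    intro s q h1 h2
    simp only [hx'def]
    split_ifs <;> rfl
  have hjm : j ∈ Finset.Icc 1 d := Finset.mem_Icc.mpr ⟨hj1, by omega⟩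
  have hpm : p ∈ Finset.Icc 1 d := Finset.mem_Icc.mpr ⟨by omega, hpd⟩
  -- feasibility of x'
  have hfeas' : Feasible T d m lam x' := by
    refine ⟨?_, ?_, ?_⟩
    · intro q
      rw [hx'o 0 q (Or.inl (by omega))]
      exact hf0 q
    · intro s hs q
      rw [hx'o s q (Or.inr (by omega))]
      exact hfT s hs q
    · intro s hs
      obtain ⟨hd1, hd2⟩ := hfC s hs
      constructor
      · -- demand
        by_cases hsab : a ≤ s ∧ s ≤ b
        · have hsum : ∑ q ∈ Finset.Icc 1 d, x' s q = ∑ q ∈ Finset.Icc 1 d, x s q := by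
            have hpm' : p ∈ (Finset.Icc 1 d).erase j :=
              Finset.mem_erase.mpr ⟨(Ne.symm hjne), hpm⟩
            rw [← Finset.add_sum_erase _ _ hjm, ← Finset.add_sum_erase _ _ hpm',
                ← Finset.add_sum_erase _ (fun q => x s q) hjm,
                ← Finset.add_sum_erase _ (fun q => x s q) hpm']
            have hrest : ∑ q ∈ ((Finset.Icc 1 d).erase j).erase p, x' s q
                = ∑ q ∈ ((Finset.Icc 1 d).erase j).erase p, x s q := by
              refine Finset.sum_congr rfl ?_
              intro q hq
              have h1 := (Finset.mem_erase.mp hq).1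
              have h2 := (Finset.mem_erase.mp (Finset.mem_erase.mp hq).2).1
              exact hx'q s q h2 h1
            rw [hrest, hx'j s hsab.1 hsab.2, hx'p s hsab.1 hsab.2]
            have := (hmid s hsab.1 hsab.2).1
            omega
          omega
        · have hsum : ∑ q ∈ Finset.Icc 1 d, x' s q = ∑ q ∈ Finset.Icc 1 d, x s q := by
            refine Finset.sum_congr rfl ?_
            intro q _
            exact hx'o s q (by omega)
          omega
      · -- capacity
        intro q
        by_cases hsab : a ≤ s ∧ s ≤ b
        · by_cases hqj : q = j
          · subst hqj
            rw [hx'j s hsab.1 hsab.2]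
            have := hd2 q
            omega
          · by_cases hqp : q = p
            · subst hqp
              rw [hx'p s hsab.1 hsab.2]
              exact (hmid s hsab.1 hsab.2).2
            · rw [hx'q s q hqj hqp]; exact hd2 q
        · rw [hx'o s q (by omega)]; exact hd2 q
  -- cost difference
  set g : ℕ → ℝ := fun s =>
    (∑ q ∈ Finset.Icc 1 d, (l q * (x' s q : ℝ) + β q * ((x' s q - x' (s-1) q : ℕ) : ℝ)))
    - (∑ q ∈ Finset.Icc 1 d, (l q * (x s q : ℝ) + β q * ((x s q - x (s-1) q : ℕ) : ℝ)))
    with hgdef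
  have hgsum : ∀ s : ℕ, g s =
      (l j * (x' s j : ℝ) + β j * ((x' s j - x' (s-1) j : ℕ) : ℝ)
        - (l j * (x s j : ℝ) + β j * ((x s j - x (s-1) j : ℕ) : ℝ)))
      + (l p * (x' s p : ℝ) + β p * ((x' s p - x' (s-1) p : ℕ) : ℝ)
        - (l p * (x s p : ℝ) + β p * ((x s p - x (s-1) p : ℕ) : ℝ))) := by
    intro s
    simp only [hgdef]
    rw [← Finset.sum_sub_distrib]
    rw [← Finset.sum_subset (show ({j, p} : Finset ℕ) ⊆ Finset.Icc 1 d by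
          intro q hq
          rcases Finset.mem_insert.mp hq with h | h
          · exact h ▸ hjm
          · exact (Finset.mem_singleton.mp h) ▸ hpm)
        (by
          intro q hq hq2
          have h1 : q ≠ j := fun h => hq2 (by simp [h])
          have h2 : q ≠ p := fun h => hq2 (by simp [h])
          rw [hx'q s q h1 h2, hx'q (s-1) q h1 h2]
          ring)]
    rw [Finset.sum_pair hjne]
  -- vanishing outside [a, b+1]
  have hg0 : ∀ s, s < a ∨ b + 1 < s → g s = 0 := by
    intro s hs
    rw [hgsum s, hx'o s j (by omega), hx'o (s-1) j (by omega),
        hx'o s p (by omega), hx'o (s-1) p (by omega)]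
    ring
  -- interior values
  have hgint : ∀ s, a + 1 ≤ s → s ≤ b → g s = l p - l j := by
    intro s h1 h2
    have hm1 := hmid s (by omega) h2
    have hm2 := hmid (s-1) (by omega) (by omega)
    rw [hgsum s, hx'j s (by omega) h2, hx'j (s-1) (by omega) (by omega),
        hx'p s (by omega) h2, hx'p (s-1) (by omega) (by omega)]
    have e1 : (x s j - 1) - (x (s-1) j - 1) = x s j - x (s-1) j := by omega
    have e2 : (x s p + 1) - (x (s-1) p + 1) = x s p - x (s-1) p := by omega
    rw [e1, e2]
    have e3 : ((x s j - 1 : ℕ) : ℝ) = (x s j : ℝ) - 1 := by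
      have := hm1.1; push_cast [this]; ring
    rw [e3]
    push_cast
    ring
  -- bounds at a
  have hgaS : (m p ≤ x (a-1) p ∨ x a p < x (a-1) p) → g a ≤ l p - l j := by
    intro hLp
    have hm1 := hmid a (le_refl a) hab
    rw [hgsum a, hx'j a (le_refl a) hab, hx'p a (le_refl a) hab,
        hx'o (a-1) j (Or.inl (by omega)), hx'o (a-1) p (Or.inl (by omega))]
    have e3 : ((x a j - 1 : ℕ) : ℝ) = (x a j : ℝ) - 1 := by
      have := hm1.1; push_cast [this]; ring
    have ep : (x a p + 1) - x (a-1) p = x a p - x (a-1) p := by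
      rcases hLp with h | h <;> omega
    have ej2 : (((x a j - 1) - x (a-1) j : ℕ) : ℝ) ≤ ((x a j - x (a-1) j : ℕ) : ℝ) :=
      Nat.cast_le.mpr (by omega)
    have hj2 := mul_le_mul_of_nonneg_left ej2 hβj.le
    rw [e3, ep]
    push_cast
    linarith
  have hgaW : x (a-1) j = 0 → g a ≤ (l p - l j) + (β p - β j) := by
    intro hz
    have hm1 := hmid a (le_refl a) hab
    rw [hgsum a, hx'j a (le_refl a) hab, hx'p a (le_refl a) hab,
        hx'o (a-1) j (Or.inl (by omega)), hx'o (a-1) p (Or.inl (by omega))]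
    have e3 : ((x a j - 1 : ℕ) : ℝ) = (x a j : ℝ) - 1 := by
      have := hm1.1; push_cast [this]; ring
    have ej : (x a j - 1) - x (a-1) j = (x a j - x (a-1) j) - 1 := by omega
    have ej3 : (((x a j - x (a-1) j) - 1 : ℕ) : ℝ) = ((x a j - x (a-1) j : ℕ) : ℝ) - 1 := by
      have h2 : 1 ≤ x a j - x (a-1) j := by omega
      push_cast [h2]; ring
    have ep2 : (((x a p + 1) - x (a-1) p : ℕ) : ℝ) ≤ ((x a p - x (a-1) p : ℕ) : ℝ) + 1 := by
      have h0 : ((x a p + 1) - x (a-1) p : ℕ) ≤ (x a p - x (a-1) p) + 1 := by omega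
      have h1 := Nat.cast_le (α := ℝ).mpr h0
      push_cast at h1
      linarith
    have hp2 := mul_le_mul_of_nonneg_left ep2 hβp.le
    rw [e3, ej, ej3]
    push_cast
    linarith
  -- bounds at b+1 (when in range)
  have hgbS : b < T → (m p ≤ x (b+1) p ∨ x b p < x (b+1) p) → g (b+1) ≤ β j - β p := by
    intro hbT' hRp
    have hm1 := hmid b hab (le_refl b)
    have hb1 : (b + 1) - 1 = b := by omega
    rw [hgsum (b+1), hb1, hx'o (b+1) j (Or.inr (by omega)), hx'o (b+1) p (Or.inr (by omega)),
        hx'j b hab (le_refl b), hx'p b hab (le_refl b)]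
    have ep : x (b+1) p - (x b p + 1) = (x (b+1) p - x b p) - 1 := by omega
    have ep1 : 1 ≤ x (b+1) p - x b p := by
      rcases hRp with h | h <;> omega
    have ep2 : (((x (b+1) p - x b p) - 1 : ℕ) : ℝ) = ((x (b+1) p - x b p : ℕ) : ℝ) - 1 := by
      push_cast [ep1]; ring
    have ej2 : ((x (b+1) j - (x b j - 1) : ℕ) : ℝ) ≤ ((x (b+1) j - x b j : ℕ) : ℝ) + 1 := by
      have h0 : (x (b+1) j - (x b j - 1) : ℕ) ≤ (x (b+1) j - x b j) + 1 := by omega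
      have h1 := Nat.cast_le (α := ℝ).mpr h0
      push_cast at h1
      linarith
    have hj2 := mul_le_mul_of_nonneg_left ej2 hβj.le
    rw [ep, ep2]
    push_cast
    linarith
  have hgbW : b < T → x (b+1) j = 0 → g (b+1) ≤ 0 := by
    intro hbT' hz
    have hm1 := hmid b hab (le_refl b)
    have hb1 : (b + 1) - 1 = b := by omega
    rw [hgsum (b+1), hb1, hx'o (b+1) j (Or.inr (by omega)), hx'o (b+1) p (Or.inr (by omega)),
        hx'j b hab (le_refl b), hx'p b hab (le_refl b)]
    have ej : x (b+1) j - (x b j - 1) = x (b+1) j - x b j := by omega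
    have ep2 : ((x (b+1) p - (x b p + 1) : ℕ) : ℝ) ≤ ((x (b+1) p - x b p : ℕ) : ℝ) :=
      Nat.cast_le.mpr (by omega)
    have hp2 := mul_le_mul_of_nonneg_left ep2 hβp.le
    rw [ej]
    push_cast
    linarith
  -- assemble total
  set c : ℕ := min (b+1) T with hcdef
  have hac : a ≤ c := by omega
  have htot : ∑ s ∈ Finset.Icc 1 T, g s = ∑ s ∈ Finset.Icc a c, g s := by
    refine (Finset.sum_subset (Finset.Icc_subset_Icc (by omega) (by omega)) ?_).symm
    intro s hs1 hs2
    rw [Finset.mem_Icc] at hs1 hs2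
    exact hg0 s (by omega)
  have hsplit : ∑ s ∈ Finset.Icc a c, g s = g a + ∑ s ∈ Finset.Ioc a c, g s := by
    rw [Finset.Icc_eq_cons_Ioc hac, Finset.sum_cons]
  have hint : ∑ s ∈ Finset.Ioc a b, g s ≤ 0 := by
    refine Finset.sum_nonpos ?_
    intro s hs
    rw [Finset.mem_Ioc] at hs
    rw [hgint s (by omega) hs.2]
    linarith
  have htot2 : ∑ s ∈ Finset.Icc 1 T, g s < 0 := by
    rw [htot, hsplit]
    by_cases hLp : m p ≤ x (a-1) p ∨ x a p < x (a-1) p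
    · have h1 := hgaS hLp
      by_cases hbT' : b < T
      · have hc : c = b + 1 := by omega
        rw [hc, Finset.sum_Ioc_succ_top hab]
        have h2 : g (b+1) ≤ 0 := by
          rcases hR with h | h
          · linarith [hgbS hbT' h.2, hβjp]
          · rcases h with h | h
            · omega
            · exact hgbW hbT' h
        linarith
      · have hc : c = b := by omega
        rw [hc]
        linarith
    · have hz1 : x (a-1) j = 0 := by
        rcases hL with h | h
        · exact absurd h hLp
        · exact h
      have h1 := hgaW hz1
      have hRp : b < T ∧ (m p ≤ x (b+1) p ∨ x b p < x (b+1) p) := by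
        rcases hcompat with h | h
        · exact absurd h hLp
        · exact h
      have h2 := hgbS hRp.1 hRp.2
      have hc : c = b + 1 := by omega
      rw [hc, Finset.sum_Ioc_succ_top hab]
      linarith
  -- contradiction with optimality
  have hcost : cost T d β l x' - cost T d β l x = ∑ s ∈ Finset.Icc 1 T, g s := by
    simp only [cost, hgdef]
    rw [← Finset.sum_sub_distrib]
  have := hmin x' hfeas'
  have : cost T d β l x' < cost T d β l x := by linarith [htot2, hcost]
  linarith [hmin x' hfeas']

/-- In an optimal schedule, a server never switches lanes: if the server
type in lane `k` at time `t-1` is `j > 0` and the type at time `t` differs from `j`,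
then no other lane `k'` has type `≠ j` at time `t-1` and type `j` at time `t`.
Hypotheses: operating costs strictly decreasing and nonnegative, switching costs
strictly increasing and positive, on server types `1,…,d`. -/
theorem no_lane_switching (T d : ℕ) (m lam : ℕ → ℕ) (β l : ℕ → ℝ)
    (hl : ∀ j j', 1 ≤ j → j < j' → j' ≤ d → l j' < l j)
    (hl0 : ∀ j, 1 ≤ j → j ≤ d → 0 ≤ l j)
    (hβ : ∀ j j', 1 ≤ j → j < j' → j' ≤ d → β j < β j')
    (hβ0 : ∀ j, 1 ≤ j → j ≤ d → 0 < β j)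
    (x : ℕ → ℕ → ℕ) (hopt : Optimal T d m lam β l x)
    (t k j : ℕ) (ht1 : 1 ≤ t) (htT : t ≤ T)
    (hprev : lane d x (t - 1) k = j) (hj : 0 < j) (hcur : lane d x t k ≠ j) :
    ¬ ∃ k', k' ≠ k ∧ lane d x (t - 1) k' ≠ j ∧ lane d x t k' = j := by
  rintro ⟨k', hk'k, hk'prev, hk'cur⟩
  simp only [lane] at hprev hcur hk'prev hk'cur
  have hf0 := hopt.1.1
  have hfC := hopt.1.2.2
  -- d ≥ 1
  have hd1 : 1 ≤ d := by
    by_contra hd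
    have h0 : {i | i ∈ Finset.Icc 1 d ∧ k ≤ ∑ j' ∈ Finset.Icc i d, x (t-1) j'} = ∅ := by
      ext i
      simp only [Set.mem_setOf_eq, Finset.mem_Icc, Set.mem_empty_iff_false, iff_false, not_and]
      omega
    rw [h0] at hprev
    simp at hprev
    omega
  -- k > 0, k' > 0
  have hk0 : 0 < k := by
    rcases Nat.eq_zero_or_pos k with hk | hk
    · exfalso
      subst hk
      rw [lane_zero hd1] at hprev
      rw [lane_zero hd1] at hcur
      exact hcur hprev
    · exact hk
  have hk'0 : 0 < k' := by
    rcases Nat.eq_zero_or_pos k' with hk | hk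
    · exfalso
      subst hk
      rw [lane_zero hd1] at hk'cur
      rw [lane_zero hd1] at hk'prev
      exact hk'prev hk'cur
    · exact hk
  -- specifications
  obtain ⟨_, hjd, hA1, hA2⟩ := lane_spec hprev hj hk0
  obtain ⟨_, _, hB1, hB2⟩ := lane_spec hk'cur hj hk'0
  have hcurd : (∑ j' ∈ Finset.Icc j d, x t j') < k ∨ k ≤ ∑ j' ∈ Finset.Icc (j+1) d, x t j' := by
    rcases Nat.lt_or_ge (∑ j' ∈ Finset.Icc j d, x t j') k with h | h
    · exact Or.inl h
    · rcases Nat.lt_or_ge (∑ j' ∈ Finset.Icc (j+1) d, x t j') k with h2 | h2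
      · exact absurd (lane_eq hj hjd h h2) hcur
      · exact Or.inr h2
  have hk'prevd : (∑ j' ∈ Finset.Icc j d, x (t-1) j') < k' ∨
      k' ≤ ∑ j' ∈ Finset.Icc (j+1) d, x (t-1) j' := by
    rcases Nat.lt_or_ge (∑ j' ∈ Finset.Icc j d, x (t-1) j') k' with h | h
    · exact Or.inl h
    · rcases Nat.lt_or_ge (∑ j' ∈ Finset.Icc (j+1) d, x (t-1) j') k' with h2 | h2
      · exact absurd (lane_eq hj hjd h h2) hk'prev
      · exact Or.inr h2
  -- sum decompositions
  have hdec : ∀ s, ∑ j' ∈ Finset.Icc j d, x s j'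
      = x s j + ∑ j' ∈ Finset.Icc (j+1) d, x s j' := by
    intro s
    rw [Finset.Icc_add_one_left_eq_Ioc, Finset.Icc_eq_cons_Ioc hjd, Finset.sum_cons]
  rcases hcurd with hcase | hcase
  · -- Case B : sums decrease at t
    have hk'p : k' ≤ ∑ j' ∈ Finset.Icc (j+1) d, x (t-1) j' := by
      rcases hk'prevd with h | h
      · omega
      · exact h
    have hdown : ∑ j' ∈ Finset.Icc (j+1) d, x t j' < ∑ j' ∈ Finset.Icc (j+1) d, x (t-1) j' := by
      omega
    obtain ⟨p, hpmem, hpx⟩ := Finset.exists_lt_of_sum_lt hdown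
    rw [Finset.mem_Icc] at hpmem
    have hxj1 : 1 ≤ x t j := by have := hdec t; omega
    have ht2 : 2 ≤ t := by
      by_contra hcon
      have ht1' : t = 1 := by omega
      rw [ht1'] at hpx
      simp [hf0] at hpx
    have hxpm : x t p < m p := by
      have := (hfC (t-1) (Finset.mem_Icc.mpr ⟨by omega, by omega⟩)).2 p
      omega
    classical
    set Q : ℕ → Prop := fun s => t ≤ s ∧ ∀ s', t ≤ s' → s' ≤ s → 1 ≤ x s' j ∧ x s' p < m p
      with hQdef
    have hQt : Q t := by
      refine ⟨le_refl t, ?_⟩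
      intro s' h1 h2
      have : s' = t := by omega
      subst this
      exact ⟨hxj1, hxpm⟩
    obtain ⟨τ, hτt, hτT, hQτ, hτmax⟩ :
        ∃ τ, t ≤ τ ∧ τ ≤ T ∧ Q τ ∧ (τ = T ∨ ¬ Q (τ+1)) := by
      refine ⟨Nat.findGreatest Q T, Nat.le_findGreatest htT hQt,
        Nat.findGreatest_le T, Nat.findGreatest_spec htT hQt, ?_⟩
      by_cases h : Nat.findGreatest Q T = T
      · exact Or.inl h
      · refine Or.inr (Nat.findGreatest_is_greatest (Nat.lt_succ_self _) ?_)
        have h1 := Nat.findGreatest_le (P := Q) T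
        omega
    have hRB : τ = T ∨ x (τ+1) j = 0 ∨ (τ < T ∧ m p ≤ x (τ+1) p) := by
      rcases hτmax with h | hnot
      · exact Or.inl h
      · by_cases hτT' : τ = T
        · exact Or.inl hτT'
        · by_contra hcon
          push_neg at hcon
          refine hnot ⟨by omega, ?_⟩
          intro s' h1 h2
          rcases Nat.lt_or_ge s' (τ+1) with h3 | h3
          · exact hQτ.2 s' h1 (by omega)
          · have hs' : s' = τ + 1 := by omega
            rw [hs']
            refine ⟨Nat.one_le_iff_ne_zero.mpr hcon.2.1, ?_⟩
            have := hcon.2.2 (by omega)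
            omega
    refine exchange T d m lam β l hl hβ hβ0 x hopt j p t τ hj (by omega) hpmem.2
      (by omega) hτt hτT (fun s h1 h2 => hQτ.2 s h1 h2) ?_ ?_ ?_
    · exact Or.inl (Or.inr hpx)
    · rcases hRB with h | h | h
      · exact Or.inr (Or.inl h)
      · exact Or.inr (Or.inr h)
      · exact Or.inl ⟨h.1, Or.inl h.2⟩
    · exact Or.inl (Or.inr hpx)
  · -- Case A : sums increase at t
    have hSj : ∑ j' ∈ Finset.Icc j d, x (t-1) j' < k' := by
      rcases hk'prevd with h | h
      · exact h
      · omega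
    have hup : ∑ j' ∈ Finset.Icc (j+1) d, x (t-1) j' < ∑ j' ∈ Finset.Icc (j+1) d, x t j' := by
      omega
    obtain ⟨p, hpmem, hpx⟩ := Finset.exists_lt_of_sum_lt hup
    rw [Finset.mem_Icc] at hpmem
    have hxj1 : 1 ≤ x (t-1) j := by have := hdec (t-1); omega
    have ht2 : 2 ≤ t := by
      by_contra hcon
      have ht1' : t - 1 = 0 := by omega
      rw [ht1'] at hxj1
      simp [hf0] at hxj1
    have hxpm : x (t-1) p < m p := by
      have := (hfC t (Finset.mem_Icc.mpr ⟨ht1, htT⟩)).2 p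
      omega
    classical
    set P : ℕ → Prop := fun s => 1 ≤ s ∧ ∀ s', s ≤ s' → s' ≤ t-1 → 1 ≤ x s' j ∧ x s' p < m p
      with hPdef
    have hPex : ∃ s, P s := by
      refine ⟨t-1, by omega, ?_⟩
      intro s' h1 h2
      have : s' = t-1 := by omega
      subst this
      exact ⟨hxj1, hxpm⟩
    set σ := Nat.find hPex with hσdef
    have hPσ : P σ := Nat.find_spec hPex
    have hσle : σ ≤ t - 1 := Nat.find_le ⟨by omega, fun s' h1 h2 => by
      have : s' = t-1 := by omega
      subst this
      exact ⟨hxj1, hxpm⟩⟩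
    have hLB : x (σ-1) j = 0 ∨ m p ≤ x (σ-1) p := by
      by_cases hσ1 : σ = 1
      · rw [hσ1]
        simp [hf0]
      · have hnot : ¬ P (σ-1) := Nat.find_min hPex (by omega)
        by_contra hcon
        push_neg at hcon
        refine hnot ⟨by omega, ?_⟩
        intro s' h1 h2
        rcases Nat.lt_or_ge s' σ with h3 | h3
        · have : s' = σ - 1 := by omega
          subst this
          exact ⟨by omega, by omega⟩
        · exact hPσ.2 s' h3 h2
    have hbt : t - 1 + 1 = t := by omega
    refine exchange T d m lam β l hl hβ hβ0 x hopt j p σ (t-1) hj (by omega) hpmem.2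
      hPσ.1 hσle (by omega) (fun s h1 h2 => hPσ.2 s h1 h2) ?_ ?_ ?_
    · rcases hLB with h | h
      · exact Or.inr h
      · exact Or.inl (Or.inl h)
    · refine Or.inl ⟨by omega, Or.inr ?_⟩
      rw [hbt]
      exact hpx
    · refine Or.inr ⟨by omega, Or.inr ?_⟩
      rw [hbt]
      exact hpx
end

section
/- In an optimal schedule, if a server is powered down in lane k after time t-1 (ŷ_{t-1,k} > 0 and ŷ_{t,k} = 0), then there was a job in lane k at time t-1 and no job at time t, i.e., λ_{t-1} ≥ k and λ_t < k. Symmetrically, if ŷ_{t-1,k} = 0 and ŷ_{t,k} > 0, then λ_{t-1} < k and λ_t ≥ k. -/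
open Finset

lemma lane_pos_iff (d : ℕ) (x : ℕ → ℕ → ℕ) (t k : ℕ) :
    0 < lane d x t k ↔ 1 ≤ d ∧ k ≤ ∑ j ∈ Finset.Icc 1 d, x t j := by
  have hbdd : BddAbove {j | j ∈ Finset.Icc 1 d ∧ k ≤ ∑ j' ∈ Finset.Icc j d, x t j'} :=
    ⟨d, fun j hj => (Finset.mem_Icc.mp hj.1).2⟩
  constructor
  · intro h
    have hne : {j | j ∈ Finset.Icc 1 d ∧ k ≤ ∑ j' ∈ Finset.Icc j d, x t j'}.Nonempty := by
      by_contra hne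
      rw [Set.not_nonempty_iff_eq_empty] at hne
      rw [lane, hne, csSup_empty] at h
      exact lt_irrefl _ (lt_of_lt_of_le h bot_le)
    obtain ⟨hj, hk⟩ := Nat.sSup_mem hne hbdd
    rw [Finset.mem_Icc] at hj
    refine ⟨le_trans hj.1 hj.2, le_trans hk ?_⟩
    exact Finset.sum_le_sum_of_subset (Finset.Icc_subset_Icc_left hj.1)
  · rintro ⟨hd, hk⟩
    have h1 : 1 ∈ {j | j ∈ Finset.Icc 1 d ∧ k ≤ ∑ j' ∈ Finset.Icc j d, x t j'} :=
      ⟨Finset.mem_Icc.mpr ⟨le_refl 1, hd⟩, hk⟩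
    exact lt_of_lt_of_le one_pos (le_csSup hbdd h1)

lemma no_slack (T d : ℕ) (m lam : ℕ → ℕ) (β l : ℕ → ℝ)
    (hl0 : ∀ j, 1 ≤ j → j ≤ d → 0 < l j)
    (hβ0 : ∀ j, 1 ≤ j → j ≤ d → 0 < β j)
    (x : ℕ → ℕ → ℕ) (hopt : Optimal T d m lam β l x)
    (s j0 : ℕ) (hs1 : 1 ≤ s) (hsT : s ≤ T) (hj1 : 1 ≤ j0) (hjd : j0 ≤ d)
    (hcond : x (s-1) j0 < x s j0 ∨ x (s+1) j0 < x s j0)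
    (hlam : lam s < ∑ j ∈ Finset.Icc 1 d, x s j) : False := by
  obtain ⟨hfeas, hmin⟩ := hopt
  have hpos : 0 < x s j0 := by rcases hcond with h | h <;> omega
  set x' : ℕ → ℕ → ℕ := fun t' j => if t' = s ∧ j = j0 then x s j0 - 1 else x t' j with hx'def
  have hne : ∀ t' j, t' ≠ s → x' t' j = x t' j := fun t' j h => if_neg (by tauto)
  have hnej : ∀ t' j, j ≠ j0 → x' t' j = x t' j := fun t' j h => if_neg (by tauto)
  have hxs : x' s j0 = x s j0 - 1 := if_pos ⟨rfl, rfl⟩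
  have hj0mem : j0 ∈ Finset.Icc 1 d := Finset.mem_Icc.mpr ⟨hj1, hjd⟩
  have hsum : ∀ t', t' ≠ s →
      ∑ j ∈ Finset.Icc 1 d, x' t' j = ∑ j ∈ Finset.Icc 1 d, x t' j :=
    fun t' h => Finset.sum_congr rfl (fun j _ => hne t' j h)
  have hsum_s : (∑ j ∈ Finset.Icc 1 d, x' s j) + 1 = ∑ j ∈ Finset.Icc 1 d, x s j := by
    rw [← Finset.add_sum_erase _ _ hj0mem, ← Finset.add_sum_erase _ (x s) hj0mem, hxs]
    have he : ∑ j ∈ (Finset.Icc 1 d).erase j0, x' s j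
        = ∑ j ∈ (Finset.Icc 1 d).erase j0, x s j :=
      Finset.sum_congr rfl fun j hj => hnej s j (Finset.ne_of_mem_erase hj)
    omega
  have hfeas' : Feasible T d m lam x' := by
    refine ⟨fun j => ?_, fun t' ht' j => ?_, fun t' ht' => ⟨?_, fun j => ?_⟩⟩
    · rw [hne 0 j (by omega)]; exact hfeas.1 j
    · rw [hne t' j (by omega)]; exact hfeas.2.1 t' ht' j
    · by_cases h : t' = s
      · subst h
        have := (hfeas.2.2 t' ht').1
        omega
      · rw [hsum t' h]; exact (hfeas.2.2 t' ht').1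
    · by_cases h : t' = s ∧ j = j0
      · have hv : x' t' j = x s j0 - 1 := if_pos h
        rw [hv, h.2]
        exact le_trans (Nat.sub_le _ _) ((hfeas.2.2 s (h.1 ▸ ht')).2 j0)
      · have hv : x' t' j = x t' j := if_neg h
        rw [hv]; exact (hfeas.2.2 t' ht').2 j
  have hle := hmin x' hfeas'
  -- difference of costs
  set D : ℕ → ℝ := fun t' =>
      (l j0 * (x t' j0 : ℝ) + β j0 * ((x t' j0 - x (t'-1) j0 : ℕ) : ℝ)) -
      (l j0 * (x' t' j0 : ℝ) + β j0 * ((x' t' j0 - x' (t'-1) j0 : ℕ) : ℝ)) with hDdef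
  have hdiff : cost T d β l x - cost T d β l x' =
      ∑ t' ∈ Finset.Icc 1 T,
        ∑ j ∈ Finset.Icc 1 d,
          ((l j * (x t' j : ℝ) + β j * ((x t' j - x (t'-1) j : ℕ) : ℝ)) -
           (l j * (x' t' j : ℝ) + β j * ((x' t' j - x' (t'-1) j : ℕ) : ℝ))) := by
    rw [cost, cost, ← Finset.sum_sub_distrib]
    exact Finset.sum_congr rfl fun t' _ => (Finset.sum_sub_distrib _ _).symm
  have hFj : ∀ t',
      ∑ j ∈ Finset.Icc 1 d,
          ((l j * (x t' j : ℝ) + β j * ((x t' j - x (t'-1) j : ℕ) : ℝ)) -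
           (l j * (x' t' j : ℝ) + β j * ((x' t' j - x' (t'-1) j : ℕ) : ℝ))) = D t' := by
    intro t'
    refine Finset.sum_eq_single_of_mem j0 hj0mem (fun j _ hjne => ?_)
    rw [hnej t' j hjne, hnej (t'-1) j hjne]
    ring
  have hD0 : ∀ t' ∈ Finset.Icc 1 T, t' ∉ ({s, s+1} : Finset ℕ) → D t' = 0 := by
    intro t' ht' hnot
    simp only [Finset.mem_insert, Finset.mem_singleton, not_or] at hnot
    rw [Finset.mem_Icc] at ht'
    rw [hDdef]
    simp only
    rw [hne t' j0 hnot.1, hne (t'-1) j0 (by omega)]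
    ring
  have hsum2 : ∑ t' ∈ Finset.Icc 1 T,
        ∑ j ∈ Finset.Icc 1 d,
          ((l j * (x t' j : ℝ) + β j * ((x t' j - x (t'-1) j : ℕ) : ℝ)) -
           (l j * (x' t' j : ℝ) + β j * ((x' t' j - x' (t'-1) j : ℕ) : ℝ)))
      = ∑ t' ∈ Finset.Icc 1 T ∩ ({s, s+1} : Finset ℕ), D t' := by
    rw [Finset.sum_congr rfl (fun t' _ => hFj t')]
    refine (Finset.sum_subset Finset.inter_subset_left ?_).symm
    intro t' ht' hnmem
    exact hD0 t' ht' (fun hc => hnmem (Finset.mem_inter.mpr ⟨ht', hc⟩))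
  -- evaluate D s and D (s+1)
  have hDs : D s = (l j0 * (x s j0 : ℝ) + β j0 * ((x s j0 - x (s-1) j0 : ℕ) : ℝ)) -
      (l j0 * ((x s j0 - 1 : ℕ) : ℝ) + β j0 * ((x s j0 - 1 - x (s-1) j0 : ℕ) : ℝ)) := by
    rw [hDdef]
    simp only
    rw [hxs, hne (s-1) j0 (by omega)]
  have hDs1 : D (s+1) = β j0 * ((x (s+1) j0 - x s j0 : ℕ) : ℝ) -
      β j0 * ((x (s+1) j0 - (x s j0 - 1) : ℕ) : ℝ) := by
    rw [hDdef]
    simp only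
    rw [hne (s+1) j0 (by omega), Nat.add_sub_cancel, hxs]
    ring
  have hla : ((x s j0 - 1 : ℕ) : ℝ) = (x s j0 : ℝ) - 1 := by
    exact_mod_cast Nat.cast_sub hpos
  have hlp := hl0 j0 hj1 hjd
  have hbp := hβ0 j0 hj1 hjd
  have hring : l j0 * (x s j0 : ℝ) - l j0 * ((x s j0 : ℝ) - 1) = l j0 := by ring
  have hlt : 0 < ∑ t' ∈ Finset.Icc 1 T ∩ ({s, s+1} : Finset ℕ), D t' := by
    by_cases hT : s + 1 ≤ T
    · have hseteq : Finset.Icc 1 T ∩ ({s, s+1} : Finset ℕ) = {s, s+1} := by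
        apply Finset.inter_eq_right.mpr
        intro z hz
        simp only [Finset.mem_insert, Finset.mem_singleton] at hz
        rw [Finset.mem_Icc]; omega
      rw [hseteq, Finset.sum_pair (by omega : s ≠ s + 1), hDs, hDs1, hla]
      have hnat : (x s j0 - 1 - x (s-1) j0) + (x (s+1) j0 - (x s j0 - 1)) ≤
          (x s j0 - x (s-1) j0) + (x (s+1) j0 - x s j0) := by omega
      have hcast : ((x s j0 - 1 - x (s-1) j0 : ℕ) : ℝ) + ((x (s+1) j0 - (x s j0 - 1) : ℕ) : ℝ) ≤
          ((x s j0 - x (s-1) j0 : ℕ) : ℝ) + ((x (s+1) j0 - x s j0 : ℕ) : ℝ) := by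
        exact_mod_cast hnat
      nlinarith [mul_le_mul_of_nonneg_left hcast hbp.le]
    · have hseteq : Finset.Icc 1 T ∩ ({s, s+1} : Finset ℕ) = {s} := by
        ext z
        simp only [Finset.mem_inter, Finset.mem_Icc, Finset.mem_insert, Finset.mem_singleton]
        omega
      rw [hseteq, Finset.sum_singleton, hDs, hla]
      have hnat : (x s j0 - 1 - x (s-1) j0) ≤ (x s j0 - x (s-1) j0) := by omega
      have hcast : ((x s j0 - 1 - x (s-1) j0 : ℕ) : ℝ) ≤ ((x s j0 - x (s-1) j0 : ℕ) : ℝ) := by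
        exact_mod_cast hnat
      nlinarith [mul_le_mul_of_nonneg_left hcast hbp.le]
  rw [hsum2] at hdiff
  linarith

/-- In an optimal schedule (strictly positive operating costs), if a server
in lane `k` is powered down after time `t-1` (`lane (t-1) k > 0`, `lane t k = 0`), then
there was a job in lane `k` at time `t-1` and none at time `t` (`λ_{t-1} ≥ k`, `λ_t < k`);
symmetrically, if `lane (t-1) k = 0` and `lane t k > 0`, then `λ_{t-1} < k` and `λ_t ≥ k`. -/
theorem power_change_iff_job_change (T d : ℕ) (m lam : ℕ → ℕ) (β l : ℕ → ℝ)
    (hl : ∀ j j', 1 ≤ j → j < j' → j' ≤ d → l j' < l j)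
    (hl0 : ∀ j, 1 ≤ j → j ≤ d → 0 < l j)
    (hβ : ∀ j j', 1 ≤ j → j < j' → j' ≤ d → β j < β j')
    (hβ0 : ∀ j, 1 ≤ j → j ≤ d → 0 < β j)
    (x : ℕ → ℕ → ℕ) (hopt : Optimal T d m lam β l x)
    (t k : ℕ) (ht1 : 2 ≤ t) (htT : t ≤ T) :
    (0 < lane d x (t - 1) k → lane d x t k = 0 → k ≤ lam (t - 1) ∧ lam t < k) ∧
    (lane d x (t - 1) k = 0 → 0 < lane d x t k → lam (t - 1) < k ∧ k ≤ lam t) := by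
  have hfe := hopt.1
  have htmem : t ∈ Finset.Icc 1 T := Finset.mem_Icc.mpr ⟨by omega, htT⟩
  have ht1mem : t - 1 ∈ Finset.Icc 1 T := Finset.mem_Icc.mpr ⟨by omega, by omega⟩
  constructor
  · intro h1 h2
    obtain ⟨hd, hk1⟩ := (lane_pos_iff d x (t-1) k).mp h1
    have hk2 : ∑ j ∈ Finset.Icc 1 d, x t j < k := by
      by_contra hc
      push_neg at hc
      have := (lane_pos_iff d x t k).mpr ⟨hd, hc⟩
      omega
    have hlamt : lam t ≤ ∑ j ∈ Finset.Icc 1 d, x t j := (hfe.2.2 t htmem).1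
    refine ⟨?_, by omega⟩
    by_contra hcon
    push_neg at hcon
    have hex : ∃ j0 ∈ Finset.Icc 1 d, x t j0 < x (t-1) j0 := by
      by_contra hne
      push_neg at hne
      have hmono : ∑ j ∈ Finset.Icc 1 d, x (t-1) j ≤ ∑ j ∈ Finset.Icc 1 d, x t j :=
        Finset.sum_le_sum hne
      omega
    obtain ⟨j0, hj0, hlt⟩ := hex
    rw [Finset.mem_Icc] at hj0
    refine no_slack T d m lam β l hl0 hβ0 x hopt (t-1) j0 (by omega) (by omega) hj0.1 hj0.2
      (Or.inr ?_) (lt_of_lt_of_le hcon hk1)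
    rw [show t - 1 + 1 = t by omega]
    exact hlt
  · intro h1 h2
    obtain ⟨hd, hk2⟩ := (lane_pos_iff d x t k).mp h2
    have hk1 : ∑ j ∈ Finset.Icc 1 d, x (t-1) j < k := by
      by_contra hc
      push_neg at hc
      have := (lane_pos_iff d x (t-1) k).mpr ⟨hd, hc⟩
      omega
    have hlamt1 : lam (t-1) ≤ ∑ j ∈ Finset.Icc 1 d, x (t-1) j := (hfe.2.2 (t-1) ht1mem).1
    refine ⟨by omega, ?_⟩
    by_contra hcon
    push_neg at hcon
    have hex : ∃ j0 ∈ Finset.Icc 1 d, x (t-1) j0 < x t j0 := by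
      by_contra hne
      push_neg at hne
      have hmono : ∑ j ∈ Finset.Icc 1 d, x t j ≤ ∑ j ∈ Finset.Icc 1 d, x (t-1) j :=
        Finset.sum_le_sum hne
      omega
    obtain ⟨j0, hj0, hlt⟩ := hex
    rw [Finset.mem_Icc] at hj0
    exact no_slack T d m lam β l hl0 hβ0 x hopt t j0 (by omega) htT hj0.1 hj0.2
      (Or.inl hlt) (lt_of_lt_of_le hcon hk2)
end

section
/- Let X̂^u and X̂^v be feasible schedules for the problem instances I^u and I^v (u < v, same jobs λ_1..λ_u as prefix). Then the pointwise minimum schedule defined by y^min_{t,k} := min{ŷ^u_{t,k}, ŷ^v_{t,k}} is feasible for I^u. -/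
open Finset

/-- A lane-representation schedule `y` (where `y t k ∈ {0,…,d}` is the server type
serving lane `k` at time `t`, and `0` means no active server) is feasible for the
truncated instance with horizon `T`, `d` server types, `m j` servers of type `j`,
`mtot` lanes and job volumes `lam`:
* all lanes are empty at time `0` and after time `T`, and beyond lane `mtot`;
* demand: lane `k` has an active server whenever `k ≤ lam t`;
* server types are in `{0,…,d}` and sorted in descending order of lanes;
* at most `m j` lanes use server type `j` at any time. -/
def LaneFeasible (T d mtot : ℕ) (m lam : ℕ → ℕ) (y : ℕ → ℕ → ℕ) : Prop :=
  (∀ k, y 0 k = 0) ∧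
  (∀ t k, T < t → y t k = 0) ∧
  (∀ t k, mtot < k → y t k = 0) ∧
  (∀ t ∈ Finset.Icc 1 T, ∀ k ∈ Finset.Icc 1 mtot, k ≤ lam t → 1 ≤ y t k) ∧
  (∀ t k, y t k ≤ d) ∧
  (∀ t k k', k ≤ k' → y t k' ≤ y t k) ∧
  (∀ t j, 1 ≤ j →
    ((Finset.Icc 1 mtot).filter (fun k => y t k = j)).card ≤ m j)

/-- The cost of lane-schedule `y` in lane `k` at time slot `t`: operating cost of the
server type used there, plus switching cost if the server type changed. -/
noncomputable def laneCostTK (β l : ℕ → ℝ) (y : ℕ → ℕ → ℕ) (t k : ℕ) : ℝ :=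
  if y t k = 0 then 0
  else if y (t - 1) k = y t k then l (y t k)
  else l (y t k) + β (y t k)

/-- Total cost of a lane-representation schedule over horizon `T` and `mtot` lanes. -/
noncomputable def laneCost (T mtot : ℕ) (β l : ℕ → ℝ) (y : ℕ → ℕ → ℕ) : ℝ :=
  ∑ t ∈ Finset.Icc 1 T, ∑ k ∈ Finset.Icc 1 mtot, laneCostTK β l y t k

/-- An optimal lane-representation schedule: feasible of minimum cost. -/
def LaneOptimal (T d mtot : ℕ) (m lam : ℕ → ℕ) (β l : ℕ → ℝ) (y : ℕ → ℕ → ℕ) : Prop :=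
  LaneFeasible T d mtot m lam y ∧
  ∀ y', LaneFeasible T d mtot m lam y' →
    laneCost T mtot β l y ≤ laneCost T mtot β l y'

/-- If `ŷᵘ` and `ŷᵛ` are feasible lane-schedules for the truncated
instances `Iᵘ` and `Iᵛ` (`u < v`, same job sequence `lam`), then the pointwise minimum
schedule `y^min t k := min (ŷᵘ t k) (ŷᵛ t k)` is feasible for `Iᵘ`. -/
theorem min_schedule_feasible (u v d mtot : ℕ) (m lam : ℕ → ℕ)
    (huv : u < v) (yu yv : ℕ → ℕ → ℕ)
    (hu : LaneFeasible u d mtot m lam yu) (hv : LaneFeasible v d mtot m lam yv) :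
    LaneFeasible u d mtot m lam (fun t k => min (yu t k) (yv t k)) := by
  obtain ⟨hu0, huT, huM, hud, hub, hus, huc⟩ := hu
  obtain ⟨hv0, hvT, hvM, hvd, hvb, hvs, hvc⟩ := hv
  refine ⟨fun k => by simp [hu0 k], fun t k ht => by simp [huT t k ht],
    fun t k hk => by simp [huM t k hk, hvM t k hk], ?_, ?_, ?_, ?_⟩
  · intro t ht k hk hkl
    simp only [Finset.mem_Icc] at ht
    have htv : t ∈ Finset.Icc 1 v := Finset.mem_Icc.mpr ⟨ht.1, ht.2.trans huv.le⟩
    exact le_min (hud t (Finset.mem_Icc.mpr ht) k hk hkl) (hvd t htv k hk hkl)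
  · intro t k; exact min_le_of_left_le (hub t k)
  · intro t k k' h; exact le_min (min_le_of_left_le (hus t k k' h))
      (min_le_of_right_le (hvs t k k' h))
  · intro t j hj
    set S := (Finset.Icc 1 mtot).filter (fun k => min (yu t k) (yv t k) = j) with hS
    have key : S ⊆ (Finset.Icc 1 mtot).filter (fun k => yu t k = j) ∨
        S ⊆ (Finset.Icc 1 mtot).filter (fun k => yv t k = j) := by
      by_contra hcon
      rw [not_or] at hcon
      obtain ⟨hA, hB⟩ := hcon
      obtain ⟨a, haS, hau⟩ := Finset.not_subset.mp hA
      obtain ⟨b, hbS, hbv⟩ := Finset.not_subset.mp hB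
      simp only [hS, Finset.mem_filter] at haS hbS hau hbv
      have hau' : yu t a ≠ j := fun h => hau ⟨haS.1, h⟩
      have hbv' : yv t b ≠ j := fun h => hbv ⟨hbS.1, h⟩
      have hav : yv t a = j := by
        rcases min_cases (yu t a) (yv t a) with ⟨h1, _⟩ | ⟨h1, _⟩
        · exact absurd (h1 ▸ haS.2) hau'
        · exact h1 ▸ haS.2
      have hbu : yu t b = j := by
        rcases min_cases (yu t b) (yv t b) with ⟨h1, _⟩ | ⟨h1, _⟩
        · exact h1 ▸ hbS.2
        · exact absurd (h1 ▸ hbS.2) hbv'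
      have hja : j < yu t a :=
        lt_of_le_of_ne (haS.2 ▸ min_le_left (yu t a) (yv t a)) (Ne.symm hau')
      have hjb : j < yv t b :=
        lt_of_le_of_ne (hbS.2 ▸ min_le_right (yu t b) (yv t b)) (Ne.symm hbv')
      rcases le_total a b with hab | hba
      · exact absurd (hvs t a b hab) (by rw [hav]; exact not_le.mpr hjb)
      · exact absurd (hus t b a hba) (by rw [hbu]; exact not_le.mpr hja)
    rcases key with h | h
    · exact (Finset.card_le_card h).trans (huc t j hj)
    · exact (Finset.card_le_card h).trans (hvc t j hj)
end

section
/- Let γ be drawn from [0,1] with density f(x) = e^x/(e-1), let β, l > 0 and let τ ≤ ⌊β/l⌋ be a positive integer, and set q := (l/β)·τ ∈ (0,1]. Then ∫_0^q f(x)(β + l⌊x·β/l⌋) dx + ∫_q^1 f(x)·l·τ dx ≤ l·τ·e/(e-1). -/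
/-- Let `γ` be drawn from `[0,1]` with density `f x = eˣ/(e-1)`, let
`β, l > 0`, let `τ` be a positive integer with `τ ≤ ⌊β/l⌋`, and set `q := (l/β)·τ`.
Then `∫_0^q f(x)·(β + l·⌊x·β/l⌋) dx + ∫_q^1 f(x)·l·τ dx ≤ l·τ·e/(e-1)`. -/
theorem expected_block_cost (β l : ℝ) (hβ : 0 < β) (hl : 0 < l)
    (τ : ℕ) (hτ : 0 < τ) (hτβ : τ ≤ Nat.floor (β / l))
    (q : ℝ) (hq : q = l / β * τ) :
    (∫ x in (0:ℝ)..q,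
        (Real.exp x / (Real.exp 1 - 1)) * (β + l * (Nat.floor (x * β / l) : ℝ)))
      + (∫ x in q..(1:ℝ), (Real.exp x / (Real.exp 1 - 1)) * (l * τ))
    ≤ l * τ * (Real.exp 1 / (Real.exp 1 - 1)) := by
  have hel : (0:ℝ) < Real.exp 1 - 1 := by
    have := Real.exp_one_gt_d9; linarith
  have hq0 : 0 < q := by
    rw [hq]
    positivity
  have hlτβ : l * τ ≤ β := by
    have h1 : (τ : ℝ) ≤ (Nat.floor (β / l) : ℝ) := by exact_mod_cast hτβ
    have h2 : (Nat.floor (β / l) : ℝ) ≤ β / l := Nat.floor_le (by positivity)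
    have h3 : (τ : ℝ) ≤ β / l := h1.trans h2
    calc l * τ ≤ l * (β / l) := by nlinarith
    _ = β := by field_simp
  have hq1 : q ≤ 1 := by
    rw [hq]
    rw [div_mul_eq_mul_div, div_le_one hβ]
    linarith
  have hβq : β * q = l * τ := by
    rw [hq]; field_simp
  -- monotone integrand on the left
  set g : ℝ → ℝ := fun x => (Real.exp x / (Real.exp 1 - 1)) * (β + l * (Nat.floor (x * β / l) : ℝ))
  have hgmono : Monotone g := by
    intro a b hab
    have h1 : Real.exp a / (Real.exp 1 - 1) ≤ Real.exp b / (Real.exp 1 - 1) := by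
      apply div_le_div_of_nonneg_right (Real.exp_le_exp.2 hab) hel.le |>.trans_eq rfl
    have h2 : (Nat.floor (a * β / l) : ℝ) ≤ (Nat.floor (b * β / l) : ℝ) := by
      have : a * β / l ≤ b * β / l := by
        apply div_le_div_of_nonneg_right _ hl.le
        nlinarith
      exact_mod_cast Nat.floor_mono this
    have h3 : β + l * (Nat.floor (a * β / l) : ℝ) ≤ β + l * (Nat.floor (b * β / l) : ℝ) := by
      nlinarith
    have h4 : 0 ≤ Real.exp a / (Real.exp 1 - 1) := by positivity
    have h5 : 0 ≤ β + l * (Nat.floor (a * β / l) : ℝ) := by positivity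
    exact mul_le_mul h1 h3 h5 (le_trans h4 h1)
  have hgint : IntervalIntegrable g MeasureTheory.volume 0 q :=
    hgmono.intervalIntegrable
  have hcont : Continuous fun x : ℝ => (Real.exp x / (Real.exp 1 - 1)) * (β * (1 + x)) := by
    continuity
  have hcint : IntervalIntegrable (fun x : ℝ => (Real.exp x / (Real.exp 1 - 1)) * (β * (1 + x)))
      MeasureTheory.volume 0 q := hcont.intervalIntegrable _ _
  have hmono : (∫ x in (0:ℝ)..q, g x)
      ≤ ∫ x in (0:ℝ)..q, (Real.exp x / (Real.exp 1 - 1)) * (β * (1 + x)) := by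
    apply intervalIntegral.integral_mono_on hq0.le hgint hcint
    intro x hx
    have hx0 : 0 ≤ x := hx.1
    have hfl : l * (Nat.floor (x * β / l) : ℝ) ≤ x * β := by
      have := Nat.floor_le (show (0:ℝ) ≤ x * β / l by positivity)
      calc l * (Nat.floor (x * β / l) : ℝ) ≤ l * (x * β / l) := by nlinarith
      _ = x * β := by field_simp
    have : β + l * (Nat.floor (x * β / l) : ℝ) ≤ β * (1 + x) := by nlinarith
    have h4 : 0 ≤ Real.exp x / (Real.exp 1 - 1) := by positivity
    exact mul_le_mul_of_nonneg_left this h4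
  -- compute the two integrals
  have I1 : (∫ x in (0:ℝ)..q, Real.exp x * (1 + x)) = q * Real.exp q := by
    have hderiv : ∀ x ∈ Set.uIcc (0:ℝ) q,
        HasDerivAt (fun y : ℝ => y * Real.exp y) (Real.exp x * (1 + x)) x := by
      intro x _
      have := (hasDerivAt_id x).mul (Real.hasDerivAt_exp x)
      refine this.congr_deriv ?_
      simp only [id_eq]; ring
    rw [intervalIntegral.integral_eq_sub_of_hasDerivAt hderiv
      ((by continuity : Continuous fun x : ℝ => Real.exp x * (1 + x)).intervalIntegrable _ _)]
    simp
  have E1 : (∫ x in (0:ℝ)..q, (Real.exp x / (Real.exp 1 - 1)) * (β * (1 + x)))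
      = (β / (Real.exp 1 - 1)) * (q * Real.exp q) := by
    have : (fun x : ℝ => (Real.exp x / (Real.exp 1 - 1)) * (β * (1 + x)))
        = fun x : ℝ => (β / (Real.exp 1 - 1)) * (Real.exp x * (1 + x)) := by
      funext x; ring
    rw [this, intervalIntegral.integral_const_mul, I1]
  have E2 : (∫ x in q..(1:ℝ), (Real.exp x / (Real.exp 1 - 1)) * (l * τ))
      = (l * τ / (Real.exp 1 - 1)) * (Real.exp 1 - Real.exp q) := by
    have : (fun x : ℝ => (Real.exp x / (Real.exp 1 - 1)) * (l * τ))
        = fun x : ℝ => (l * τ / (Real.exp 1 - 1)) * Real.exp x := by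
      funext x; ring
    rw [this, intervalIntegral.integral_const_mul, integral_exp]
  calc (∫ x in (0:ℝ)..q, g x)
        + (∫ x in q..(1:ℝ), (Real.exp x / (Real.exp 1 - 1)) * (l * τ))
      ≤ (∫ x in (0:ℝ)..q, (Real.exp x / (Real.exp 1 - 1)) * (β * (1 + x)))
        + (∫ x in q..(1:ℝ), (Real.exp x / (Real.exp 1 - 1)) * (l * τ)) := by linarith
    _ = (β / (Real.exp 1 - 1)) * (q * Real.exp q)
        + (l * τ / (Real.exp 1 - 1)) * (Real.exp 1 - Real.exp q) := by rw [E1, E2]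
    _ = l * τ * (Real.exp 1 / (Real.exp 1 - 1)) := by
        have hne : Real.exp 1 - 1 ≠ 0 := ne_of_gt hel
        field_simp
        nlinarith [hβq, Real.exp_pos q]
end

section
/- For a single server type with switching cost β > 0 and operating cost l > 0 with l ≤ β/N^4 · (relative scale), any deterministic online schedule over t time slots that powers up the server n ≥ N/8 times (forced by the adversary who issues a job exactly when the algorithm has no active server) has cost n·β + l·(t - n + 1) ≥ (2 - 9/N)·C*, where C* = min{β + l·t, n·(β + l)} upper-bounds the optimal offline cost. -/
set_option maxHeartbeats 1000000

/-- Lower-bound construction for a single server type with switching cost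
`β = N²` and operating cost `l = 1/N²`, `N ≥ 6`. If a deterministic online schedule
over `t` time slots powers the server up `n ≥ N/8` times (with `n ≤ t`, as forced by
the adversary who issues a job exactly when the algorithm has no active server), then
its cost `n·β + l·(t - n + 1)` is at least `(2 - 9/N)` times
`C* = min {β + l·t, n·(β + l)}`, which upper-bounds the optimal offline cost. -/
theorem single_type_lower_bound (N : ℝ) (hN : 6 ≤ N) (t n : ℕ)
    (hn : N / 8 ≤ (n : ℝ)) (hnt : n ≤ t) :
    (2 - 9 / N) * min (N ^ 2 + 1 / N ^ 2 * (t : ℝ)) ((n : ℝ) * (N ^ 2 + 1 / N ^ 2))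
      ≤ (n : ℝ) * N ^ 2 + 1 / N ^ 2 * ((t : ℝ) - (n : ℝ) + 1) := by
  have hN0 : (0:ℝ) < N := by linarith
  have hN2 : (0:ℝ) < N ^ 2 := by positivity
  have hN3 : (0:ℝ) < N ^ 3 := by positivity
  have hn0 : 0 < n := by
    by_contra h
    push_neg at h
    interval_cases n
    simp only [Nat.cast_zero] at hn
    linarith
  have hx1 : (1:ℝ) ≤ (n:ℝ) := by exact_mod_cast hn0
  have hst : (n:ℝ) ≤ (t:ℝ) := by exact_mod_cast hnt
  set x := (n:ℝ) with hxdef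
  set s := (t:ℝ) with hsdef
  have hs0 : (0:ℝ) ≤ s := by positivity
  -- the core polynomial inequality used in the "large N / large t" regimes
  have hcore : (0:ℝ) ≤ x * (9 * N ^ 4 + 9 - 2 * N) - N ^ 5 + N := by
    have h216 : (216:ℝ) ≤ N ^ 3 := by nlinarith
    have hA : (0:ℝ) ≤ 9 * N ^ 4 + 9 - 2 * N := by nlinarith
    have hB := mul_le_mul_of_nonneg_right hn hA
    nlinarith [mul_le_mul_of_nonneg_right h216 hN2.le]
  rcases le_total (N ^ 2 + 1 / N ^ 2 * s) (x * (N ^ 2 + 1 / N ^ 2)) with h | h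
  · rw [min_eq_left h]
    have h' : N ^ 4 + s ≤ x * N ^ 4 + x := by
      have h2 := mul_le_mul_of_nonneg_right h hN2.le
      have e1 : (N ^ 2 + 1 / N ^ 2 * s) * N ^ 2 = N ^ 4 + s := by
        field_simp
      have e2 : (x * (N ^ 2 + 1 / N ^ 2)) * N ^ 2 = x * N ^ 4 + x := by
        field_simp
      rw [e1, e2] at h2
      exact h2
    rw [← sub_nonneg]
    have key : x * N ^ 2 + 1 / N ^ 2 * (s - x + 1)
        - (2 - 9 / N) * (N ^ 2 + 1 / N ^ 2 * s)
        = (N * (x * N ^ 4 + s - x + 1) - (2 * N - 9) * (N ^ 4 + s)) / N ^ 3 := by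
      field_simp
      ring
    rw [key]
    apply div_nonneg _ hN3.le
    rcases le_total N 9 with h9 | h9
    · rcases eq_or_lt_of_le hx1 with hx | hx
      · -- x = 1
        nlinarith [mul_nonneg (sub_nonneg.2 h9) hs0,
          mul_nonneg (sub_nonneg.2 h9) (pow_pos hN0 4).le]
      · have hx2 : (2:ℝ) ≤ x := by
          rw [hxdef] at hx ⊢
          have h1 : 1 < n := by exact_mod_cast hx
          exact_mod_cast h1
        have hN5N : (0:ℝ) ≤ N ^ 5 - N := by
          have h1N : (1:ℝ) ≤ N := by linarith
          have h4 : (1:ℝ) ≤ N ^ 4 := one_le_pow₀ h1N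
          nlinarith [mul_nonneg hN0.le (sub_nonneg.2 h4)]
        nlinarith [mul_nonneg (sub_nonneg.2 h9) hs0,
          mul_nonneg (sub_nonneg.2 hx2) hN5N]
    · nlinarith [mul_nonneg (sub_nonneg.2 h9) (sub_nonneg.2 h')]
  · rw [min_eq_right h]
    have h' : x * N ^ 4 + x ≤ N ^ 4 + s := by
      have h2 := mul_le_mul_of_nonneg_right h hN2.le
      have e1 : (N ^ 2 + 1 / N ^ 2 * s) * N ^ 2 = N ^ 4 + s := by
        field_simp
      have e2 : (x * (N ^ 2 + 1 / N ^ 2)) * N ^ 2 = x * N ^ 4 + x := by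
        field_simp
      rw [e1, e2] at h2
      exact h2
    rw [← sub_nonneg]
    have key : x * N ^ 2 + 1 / N ^ 2 * (s - x + 1)
        - (2 - 9 / N) * (x * (N ^ 2 + 1 / N ^ 2))
        = (N * (x * N ^ 4 + s - x + 1) - (2 * N - 9) * (x * N ^ 4 + x)) / N ^ 3 := by
      field_simp
      ring
    rw [key]
    apply div_nonneg _ hN3.le
    nlinarith [mul_nonneg hN0.le (sub_nonneg.2 h')]
end

section
/- In the schedule produced by the deterministic online algorithm A, for every time slot t the server types in the lanes are sorted in descending order: y^A_{t,k} ≥ y^A_{t,k'} for all k < k'. -/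
open Finset

/-- `tbar β l j = ⌊β j / l j⌋` is the number of time slots a server of type `j ≥ 1`
stays active in algorithm `A` (with `tbar 0 = 0` for "no server"). -/
noncomputable def tbar (β l : ℕ → ℝ) (j : ℕ) : ℕ :=
  if j = 0 then 0 else Nat.floor (β j / l j)

/-- The state of algorithm `A` after time slot `t`: for each lane `k`, the pair
`(run t).1 k` (currently active server type, `0` = none) and `(run t).2 k` (the expiry
time slot at which that server will be powered down). At time `t`, given the optimal
truncated schedule `X̂^t` with final-slot lane types `Yhat t t k`, the algorithm
upgrades the server in lane `k` to `Yhat t t k` if the current type is smaller or the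
expiry time has been reached, and otherwise keeps it and extends the expiry time by
`tbar (Yhat t t k)`. -/
noncomputable def run (β l : ℕ → ℝ) (Yhat : ℕ → ℕ → ℕ → ℕ) : ℕ → (ℕ → ℕ) × (ℕ → ℕ)
  | 0 => (fun _ => 0, fun _ => 0)
  | t + 1 =>
    let s := run β l Yhat t
    let Y := fun k => Yhat (t + 1) (t + 1) k
    (fun k => if s.1 k < Y k ∨ s.2 k ≤ t + 1 then Y k else s.1 k,
     fun k =>
       if s.1 k < Y k ∨ s.2 k ≤ t + 1 then t + 1 + tbar β l (Y k)
       else max (s.2 k) (t + 1 + tbar β l (Y k)))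

/-- The lane-representation schedule `y^A` computed by algorithm `A`. -/
noncomputable def yAlg (β l : ℕ → ℝ) (Yhat : ℕ → ℕ → ℕ → ℕ) (t k : ℕ) : ℕ :=
  (run β l Yhat t).1 k

lemma tbar_mono (d : ℕ) (β l : ℕ → ℝ)
    (hl : ∀ j j', 1 ≤ j → j < j' → j' ≤ d → l j' < l j)
    (hl0 : ∀ j, 1 ≤ j → j ≤ d → 0 < l j)
    (hβ : ∀ j j', 1 ≤ j → j < j' → j' ≤ d → β j < β j')
    (hβ0 : ∀ j, 1 ≤ j → j ≤ d → 0 < β j)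
    {j j' : ℕ} (h : j ≤ j') (hd : j' ≤ d) :
    tbar β l j ≤ tbar β l j' := by
  rcases Nat.eq_zero_or_pos j with h0 | h1
  · simp [tbar, h0]
  rcases eq_or_lt_of_le h with rfl | hlt
  · exact le_rfl
  have hj'1 : 1 ≤ j' := le_trans h1 h
  have hjd : j ≤ d := h.trans hd
  have hb : β j < β j' := hβ j j' h1 hlt hd
  have hlpos' : 0 < l j' := hl0 j' hj'1 hd
  have hll : l j' < l j := hl j j' h1 hlt hd
  have h1' : β j / l j ≤ β j' / l j' :=
    div_le_div₀ (hβ0 j' hj'1 hd).le hb.le hlpos' hll.le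
  simp only [tbar, if_neg (by omega : j ≠ 0), if_neg (by omega : j' ≠ 0)]
  exact Nat.floor_le_floor h1'

/-- In the schedule produced by the deterministic online algorithm `A`,
for every time slot the server types in the lanes are sorted in descending order.
Hypotheses: server types `1,…,d` have sorted costs (`l` strictly decreasing and
positive, `β` strictly increasing and positive), the reference schedules `X̂^t` take
values in `{0,…,d}`, have sorted final-slot lanes, and dominate their predecessors. -/
theorem alg_lanes_sorted (d : ℕ) (β l : ℕ → ℝ)
    (hl : ∀ j j', 1 ≤ j → j < j' → j' ≤ d → l j' < l j)
    (hl0 : ∀ j, 1 ≤ j → j ≤ d → 0 < l j)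
    (hβ : ∀ j j', 1 ≤ j → j < j' → j' ≤ d → β j < β j')
    (hβ0 : ∀ j, 1 ≤ j → j ≤ d → 0 < β j)
    (Yhat : ℕ → ℕ → ℕ → ℕ)
    (hrange : ∀ t t' k, Yhat t t' k ≤ d)
    (hsorted : ∀ t k k', k ≤ k' → Yhat t t k' ≤ Yhat t t k)
    (hdom : ∀ t t' k, Yhat t t' k ≤ Yhat (t + 1) t' k) :
    ∀ t k k', k ≤ k' → yAlg β l Yhat t k' ≤ yAlg β l Yhat t k := by
  have tb : ∀ j j', j ≤ j' → j' ≤ d → tbar β l j ≤ tbar β l j' :=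
    fun j j' h hd' => tbar_mono d β l hl hl0 hβ hβ0 h hd'
  have key : ∀ t, (∀ k, (run β l Yhat t).1 k ≤ d) ∧
      (∀ k, (run β l Yhat t).2 k ≤ t + tbar β l ((run β l Yhat t).1 k)) ∧
      (∀ k k', k ≤ k' → (run β l Yhat t).1 k' ≤ (run β l Yhat t).1 k ∧
        (run β l Yhat t).2 k' ≤ (run β l Yhat t).2 k) := by
    intro t
    induction t with
    | zero => refine ⟨fun k => by simp [run], fun k => by simp [run, tbar], fun k k' _ => by simp [run]⟩
    | succ t ih =>
      obtain ⟨hd1, hq, hs⟩ := ih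
      set s := run β l Yhat t with hsdef
      set Y : ℕ → ℕ := fun k => Yhat (t + 1) (t + 1) k with hYdef
      have h1 : ∀ k, (run β l Yhat (t+1)).1 k =
          (if s.1 k < Y k ∨ s.2 k ≤ t + 1 then Y k else s.1 k) := fun k => rfl
      have h2 : ∀ k, (run β l Yhat (t+1)).2 k =
          (if s.1 k < Y k ∨ s.2 k ≤ t + 1 then t + 1 + tbar β l (Y k)
           else max (s.2 k) (t + 1 + tbar β l (Y k))) := fun k => rfl
      have hYd : ∀ k, Y k ≤ d := fun k => hrange _ _ _
      have hYs : ∀ k k', k ≤ k' → Y k' ≤ Y k := fun k k' h => hsorted _ _ _ h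
      refine ⟨?_, ?_, ?_⟩
      · intro k; rw [h1]; split
        · exact hYd k
        · exact hd1 k
      · intro k; rw [h1, h2]; split
        · omega
        · rename_i hc
          push_neg at hc
          have hy : Y k ≤ s.1 k := hc.1
          have := hq k
          have htb : tbar β l (Y k) ≤ tbar β l (s.1 k) := tb _ _ hy (hd1 k)
          have h' : s.2 k ≤ t + 1 + tbar β l (s.1 k) := by omega
          exact max_le h' (by omega)
      · intro k k' hk
        obtain ⟨hY1, hY2⟩ := hs k k' hk
        have hYkk : Y k' ≤ Y k := hYs k k' hk
        have htbY : tbar β l (Y k') ≤ tbar β l (Y k) := tb _ _ hYkk (hYd k)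
        rw [h1, h1, h2, h2]
        by_cases ck : s.1 k < Y k ∨ s.2 k ≤ t + 1 <;>
          by_cases ck' : s.1 k' < Y k' ∨ s.2 k' ≤ t + 1
        · simp only [if_pos ck, if_pos ck']
          exact ⟨hYkk, by omega⟩
        · simp only [if_pos ck, if_neg ck']
          push_neg at ck'
          have h2k' : t + 1 < s.2 k' := ck'.2
          have hsk : ¬ s.2 k ≤ t + 1 := by omega
          have hslt : s.1 k < Y k := ck.resolve_right hsk
          constructor
          · omega
          · have htbs : tbar β l (s.1 k) ≤ tbar β l (Y k) := tb _ _ hslt.le (hYd k)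
            have := hq k
            refine max_le ?_ (by omega)
            omega
        · simp only [if_neg ck, if_pos ck']
          push_neg at ck
          have hy : Y k ≤ s.1 k := ck.1
          exact ⟨le_trans hYkk hy, le_max_of_le_right (by omega)⟩
        · simp only [if_neg ck, if_neg ck']
          exact ⟨hY1, max_le_max hY2 (by omega)⟩
  intro t k k' hk
  exact ((key t).2.2 k k' hk).1
end
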